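/- arXiv:2009.11981 — 2 statements merged into one kernel-verified Lean document; each statement's English description precedes it below -/
import Mathlib

section
/- (Conditional nonnegativity of LS cubature weights) Let Ω ⊂ ℝ^d be compact, F a K-dimensional space of continuous functions on Ω containing the constant function 1, (x_n) ⊂ Ω a point sequence, and (r_n) ⊂ ℝ≥0 discrete weights such that Σ_{n=1}^N r_n u(x_n)v(x_n) → ∫_Ω ω u v dx for all u,v ∈ F as N → ∞, where the induced integral inner product is positive definite on F. Assume the subsequence of points with r_n > 0 is eventually F-unisolvent. Then there exists N₀ such that for all N ≥ N₀, the least-squares cubature weights w_n^{LS} = r_n Σ_{k=1}^K π_k(x_n; r) I[π_k(·;r)] are all nonnegative. -/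
open MeasureTheory Filter Topology

private lemma swap_aux' {κ : Type*} [Fintype κ] {N : ℕ} (a : κ → ℝ) (f : κ → ℕ → ℝ)
    (g : ℕ → ℝ) :
    ∑ n ∈ Finset.range N, g n * (∑ i, a i * f i n) =
      ∑ i, a i * ∑ n ∈ Finset.range N, g n * f i n := by
  simp_rw [Finset.mul_sum]
  rw [Finset.sum_comm]
  exact Finset.sum_congr rfl fun i _ => Finset.sum_congr rfl fun n _ => by ring

/-- Conditional nonnegativity of the least-squares cubature weights: if the
discrete inner products converge to the (positive definite) continuous inner
product on `F` (with `1 ∈ F`), and the points with positive discrete weight are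
eventually `F`-unisolvent, then for all large `N` the least-squares weights
`w_n^{LS} = r_n ∑_k π_k(x_n; r) I[π_k(·; r)]` are nonnegative. -/
theorem ls_weights_conditionally_nonneg {d K : ℕ}
    (Ω : Set (EuclideanSpace ℝ (Fin d))) (hΩ : IsCompact Ω)
    (F : Submodule ℝ ((EuclideanSpace ℝ (Fin d)) → ℝ))
    (hFc : ∀ f ∈ F, ContinuousOn f Ω)
    (hFdim : Module.finrank ℝ F = K)
    (hone : (fun _ => (1 : ℝ)) ∈ F)
    (ω : (EuclideanSpace ℝ (Fin d)) → ℝ)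
    (x : ℕ → EuclideanSpace ℝ (Fin d)) (hx : ∀ n, x n ∈ Ω)
    (r : ℕ → ℝ) (hr : ∀ n, 0 ≤ r n)
    (hconv : ∀ u ∈ F, ∀ v ∈ F,
      Tendsto (fun N => ∑ n ∈ Finset.range N, r n * u (x n) * v (x n)) atTop
        (𝓝 (∫ y in Ω, ω y * u y * v y)))
    (hposdef : ∀ u ∈ F, (∃ y ∈ Ω, u y ≠ 0) → 0 < ∫ y in Ω, ω y * u y ^ 2)
    (huni : ∃ N₁, ∀ N ≥ N₁, ∀ f ∈ F,
      (∀ n < N, 0 < r n → f (x n) = 0) → ∀ y ∈ Ω, f y = 0)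
    -- discrete orthonormal bases of `F` w.r.t. `[u,v]_N`, for all large `N`
    (π : ℕ → Fin K → (EuclideanSpace ℝ (Fin d)) → ℝ)
    (hπ : ∀ᶠ N in atTop,
      (∀ k, π N k ∈ F) ∧
      (∀ k l, (∑ n ∈ Finset.range N, r n * π N k (x n) * π N l (x n)) =
        if k = l then (1 : ℝ) else 0) ∧
      Submodule.span ℝ (Set.range (π N)) = F) :
    ∃ N₀, ∀ N ≥ N₀, ∀ n < N,
      0 ≤ r n * ∑ k, π N k (x n) * ∫ y in Ω, ω y * π N k y := by
  classical
  obtain ⟨N₂, h2⟩ := eventually_atTop.mp hπ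
  obtain ⟨heF, heON, heSpan⟩ := h2 N₂ le_rfl
  -- the Gram matrices
  set MN : ℕ → Matrix (Fin K) (Fin K) ℝ :=
    fun N i j => ∑ n ∈ Finset.range N, r n * π N₂ i (x n) * π N₂ j (x n) with hMNdef
  set M : Matrix (Fin K) (Fin K) ℝ :=
    fun i j => ∫ z in Ω, ω z * π N₂ i z * π N₂ j z with hMdef
  have hMNtend : Tendsto MN atTop (𝓝 M) := by
    apply tendsto_pi_nhds.mpr; intro i; apply tendsto_pi_nhds.mpr; intro j
    exact hconv _ (heF i) _ (heF j)
  have hMsymm : ∀ i j, M i j = M j i := by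
    intro i j
    simp only [hMdef]
    congr 1
    funext z
    ring
  -- the limit Gram matrix is invertible
  have hMdet : M.det ≠ 0 := by
    intro hdet
    obtain ⟨v, hv0, hvM⟩ := Matrix.exists_mulVec_eq_zero_iff.mpr hdet
    set u : EuclideanSpace ℝ (Fin d) → ℝ := fun y => ∑ i, v i * π N₂ i y with hu
    have huxn : ∀ y, u y = ∑ i, v i * π N₂ i y := fun y => rfl
    have huF : u ∈ F := by
      have h1 : u = ∑ i, v i • π N₂ i := by
        funext y; simp [hu, Finset.sum_apply, Pi.smul_apply, smul_eq_mul]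
      rw [h1]
      exact Submodule.sum_mem _ fun i _ => Submodule.smul_mem _ _ (heF i)
    have hunz : ∃ y ∈ Ω, u y ≠ 0 := by
      by_contra hcon
      push_neg at hcon
      apply hv0
      funext l
      have h1 : ∑ n ∈ Finset.range N₂, r n * u (x n) * π N₂ l (x n) = v l := by
        calc ∑ n ∈ Finset.range N₂, r n * u (x n) * π N₂ l (x n)
            = ∑ n ∈ Finset.range N₂, (fun m => r m * π N₂ l (x m)) n *
                (∑ i, v i * π N₂ i (x n)) := by
              exact Finset.sum_congr rfl fun n _ => by simp only [huxn]; try ring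
          _ = ∑ i, v i * ∑ n ∈ Finset.range N₂,
                (fun m => r m * π N₂ l (x m)) n * π N₂ i (x n) := by
              exact swap_aux' v (fun i n => π N₂ i (x n)) _
          _ = ∑ i, v i * ∑ n ∈ Finset.range N₂, r n * π N₂ i (x n) * π N₂ l (x n) := by
              exact Finset.sum_congr rfl fun i _ => by
                congr 1
                exact Finset.sum_congr rfl fun n _ => by ring
          _ = v l := by simp [heON]
      have h2 : ∑ n ∈ Finset.range N₂, r n * u (x n) * π N₂ l (x n) = 0 := by
        apply Finset.sum_eq_zero; intro n _
        rw [hcon (x n) (hx n)]; ring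
      have h3 := h1.symm.trans h2
      simpa using h3
    have hlim1 := hconv u huF u huF
    have hlim2 : Tendsto (fun N => ∑ n ∈ Finset.range N, r n * u (x n) * u (x n)) atTop
        (𝓝 0) := by
      have heq : ∀ N, (∑ n ∈ Finset.range N, r n * u (x n) * u (x n))
          = ∑ j, v j * ∑ i, v i * MN N i j := by
        intro N
        calc ∑ n ∈ Finset.range N, r n * u (x n) * u (x n)
            = ∑ n ∈ Finset.range N, (fun m => r m * u (x m)) n *
                (∑ j, v j * π N₂ j (x n)) := by
              exact Finset.sum_congr rfl fun n _ => by simp only [huxn]; try ring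
          _ = ∑ j, v j * ∑ n ∈ Finset.range N,
                (fun m => r m * u (x m)) n * π N₂ j (x n) := by
              exact swap_aux' v (fun j n => π N₂ j (x n)) _
          _ = ∑ j, v j * ∑ i, v i * MN N i j := by
              refine Finset.sum_congr rfl fun j _ => ?_
              congr 1
              calc ∑ n ∈ Finset.range N, (fun m => r m * u (x m)) n * π N₂ j (x n)
                  = ∑ n ∈ Finset.range N, (fun m => r m * π N₂ j (x m)) n *
                      (∑ i, v i * π N₂ i (x n)) := by
                    exact Finset.sum_congr rfl fun n _ => by simp only [huxn]; try ring
                _ = ∑ i, v i * ∑ n ∈ Finset.range N,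
                      (fun m => r m * π N₂ j (x m)) n * π N₂ i (x n) := by
                    exact swap_aux' v (fun i n => π N₂ i (x n)) _
                _ = ∑ i, v i * MN N i j := by
                    refine Finset.sum_congr rfl fun i _ => ?_
                    congr 1
                    simp only [hMNdef]
                    exact Finset.sum_congr rfl fun n _ => by ring
      have hz : (0:ℝ) = ∑ j, v j * ∑ i, v i * M i j := by
        symm
        have h5 : ∀ j, (∑ i, v i * M i j) = 0 := by
          intro j
          have h3 : M.mulVec v j = 0 := by rw [hvM]; rfl
          have h4 : ∑ i, M j i * v i = 0 := by
            simpa [Matrix.mulVec, dotProduct] using h3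
          rw [← h4]
          exact Finset.sum_congr rfl fun i _ => by rw [hMsymm i j]; ring
        simp [h5]
      rw [hz]
      refine Tendsto.congr (fun N => (heq N).symm) ?_
      apply tendsto_finset_sum; intro j _
      refine Tendsto.const_mul _ ?_
      apply tendsto_finset_sum; intro i _
      exact (hconv _ (heF i) _ (heF j)).const_mul _
    have h0 : (∫ z in Ω, ω z * u z * u z) = 0 := tendsto_nhds_unique hlim1 hlim2
    have hpos := hposdef u huF hunz
    rw [show (fun z => ω z * u z ^ 2) = fun z => ω z * u z * u z from by funext z; ring] at hpos
    rw [h0] at hpos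
    exact lt_irrefl _ hpos
  -- simplified convergence statement against the constant function 1
  have hconv1 : ∀ v ∈ F, Tendsto (fun N => ∑ n ∈ Finset.range N, r n * v (x n)) atTop
      (𝓝 (∫ z in Ω, ω z * v z)) := by
    intro v hv
    have h1 := hconv _ hone v hv
    simpa using h1
  -- determinant and adjugate converge
  have hdetTend : Tendsto (fun N => (MN N).det) atTop (𝓝 M.det) :=
    ((Continuous.matrix_det continuous_id).tendsto M).comp hMNtend
  have hadjTend : Tendsto (fun N => (MN N).adjugate) atTop (𝓝 M.adjugate) :=
    ((Continuous.matrix_adjugate continuous_id).tendsto M).comp hMNtend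
  have hadjTend' : ∀ i j, Tendsto (fun N => (MN N).adjugate i j) atTop
      (𝓝 (M.adjugate i j)) := by
    intro i j
    exact (tendsto_pi_nhds.mp ((tendsto_pi_nhds.mp hadjTend) i)) j
  -- coordinates of g_N - 1 in the fixed basis
  have hrep : ∀ N, ∃ cc : Fin K → ℝ, N₂ ≤ N → ∀ y,
      (∑ i, cc i * π N₂ i y) = (∑ k, π N k y * ∫ z in Ω, ω z * π N k z) - 1 := by
    intro N
    by_cases hN : N₂ ≤ N
    · obtain ⟨hFN, hONN, hSpanN⟩ := h2 N hN
      have hgF : (fun y => (∑ k, π N k y * ∫ z in Ω, ω z * π N k z) - 1) ∈ F := by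
        have hsumF : (fun y => ∑ k, π N k y * ∫ z in Ω, ω z * π N k z) ∈ F := by
          have h1 : (fun y => ∑ k, π N k y * ∫ z in Ω, ω z * π N k z)
              = ∑ k, (∫ z in Ω, ω z * π N k z) • π N k := by
            funext y
            simp [Finset.sum_apply, Pi.smul_apply, smul_eq_mul, mul_comm]
          rw [h1]
          exact Submodule.sum_mem _ fun k _ => Submodule.smul_mem _ _ (hFN k)
        have h2' := Submodule.sub_mem F hsumF hone
        convert h2' using 1; rfl
      rw [← heSpan] at hgF
      obtain ⟨cc, hcc⟩ := (Submodule.mem_span_range_iff_exists_fun ℝ).mp hgF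
      refine ⟨cc, fun _ y => ?_⟩
      have h3 := congrFun hcc y
      simpa [Finset.sum_apply, Pi.smul_apply, smul_eq_mul] using h3
    · exact ⟨0, fun h => absurd h hN⟩
  choose c hcrep using hrep
  -- the defect vector
  set εv : ℕ → Fin K → ℝ := fun N j =>
    (∫ z in Ω, ω z * π N₂ j z) - ∑ n ∈ Finset.range N, r n * π N₂ j (x n) with hεdef
  have hεt : ∀ j, Tendsto (fun N => εv N j) atTop (𝓝 0) := by
    intro j
    have h1 := hconv1 _ (heF j)
    have h2' : Tendsto (fun N => (∫ z in Ω, ω z * π N₂ j z)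
        - ∑ n ∈ Finset.range N, r n * π N₂ j (x n)) atTop
        (𝓝 ((∫ z in Ω, ω z * π N₂ j z) - ∫ z in Ω, ω z * π N₂ j z)) :=
      tendsto_const_nhds.sub h1
    simpa [hεdef] using h2'
  -- the key linear system satisfied by the coordinates
  have hkey : ∀ N, N₂ ≤ N → ∀ j, (MN N).mulVec (c N) j = εv N j := by
    intro N hN j
    obtain ⟨hFN, hONN, hSpanN⟩ := h2 N hN
    have hjF : π N₂ j ∈ Submodule.span ℝ (Set.range (π N)) := by
      rw [hSpanN]; exact heF j
    obtain ⟨a, ha⟩ := (Submodule.mem_span_range_iff_exists_fun ℝ).mp hjF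
    have ha' : ∀ y, (∑ k, a k * π N k y) = π N₂ j y := by
      intro y
      have h3 := congrFun ha y
      simpa [Finset.sum_apply, Pi.smul_apply, smul_eq_mul] using h3
    have hIlin : (∫ z in Ω, ω z * π N₂ j z) = ∑ k, a k * ∫ z in Ω, ω z * π N k z := by
      refine tendsto_nhds_unique (hconv1 _ (heF j)) ?_
      have t3 : ∀ N', (∑ n ∈ Finset.range N', r n * π N₂ j (x n))
          = ∑ k, a k * ∑ n ∈ Finset.range N', r n * π N k (x n) := by
        intro N'
        calc ∑ n ∈ Finset.range N', r n * π N₂ j (x n)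
            = ∑ n ∈ Finset.range N', r n * (∑ k, a k * π N k (x n)) :=
              Finset.sum_congr rfl fun n _ => by rw [ha' (x n)]
          _ = ∑ k, a k * ∑ n ∈ Finset.range N', r n * π N k (x n) :=
              swap_aux' a (fun k n => π N k (x n)) r
      refine Tendsto.congr (fun N' => (t3 N').symm) ?_
      exact tendsto_finset_sum _ fun k _ => (hconv1 _ (hFN k)).const_mul _
    have inner1 : ∀ k, (∑ n ∈ Finset.range N, r n * π N₂ j (x n) * π N k (x n)) = a k := by
      intro k
      calc ∑ n ∈ Finset.range N, r n * π N₂ j (x n) * π N k (x n)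
          = ∑ n ∈ Finset.range N, (r n * π N k (x n)) * (∑ l, a l * π N l (x n)) :=
            Finset.sum_congr rfl fun n _ => by rw [ha' (x n)]; ring
        _ = ∑ l, a l * ∑ n ∈ Finset.range N, (r n * π N k (x n)) * π N l (x n) :=
            swap_aux' a (fun l n => π N l (x n)) (fun n => r n * π N k (x n))
        _ = ∑ l, a l * (if k = l then 1 else 0) := by
            refine Finset.sum_congr rfl fun l _ => ?_
            congr 1
            rw [← hONN k l]
        _ = a k := by simp
    have s1 : (MN N).mulVec (c N) j
        = ∑ n ∈ Finset.range N, (r n * π N₂ j (x n)) * (∑ i, c N i * π N₂ i (x n)) := by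
      rw [swap_aux' (c N) (fun i n => π N₂ i (x n)) (fun n => r n * π N₂ j (x n))]
      simp only [Matrix.mulVec, dotProduct, hMNdef]
      exact Finset.sum_congr rfl fun i _ => by ring
    rw [s1]
    have s2 : ∑ n ∈ Finset.range N, (r n * π N₂ j (x n)) * (∑ i, c N i * π N₂ i (x n))
        = (∑ n ∈ Finset.range N,
            (r n * π N₂ j (x n)) * (∑ k, π N k (x n) * ∫ z in Ω, ω z * π N k z))
          - ∑ n ∈ Finset.range N, r n * π N₂ j (x n) := by
      rw [← Finset.sum_sub_distrib]
      refine Finset.sum_congr rfl fun n _ => ?_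
      rw [hcrep N hN (x n)]
      ring
    rw [s2]
    have s3 : (∑ n ∈ Finset.range N,
          (r n * π N₂ j (x n)) * (∑ k, π N k (x n) * ∫ z in Ω, ω z * π N k z))
        = ∫ z in Ω, ω z * π N₂ j z := by
      calc ∑ n ∈ Finset.range N,
            (r n * π N₂ j (x n)) * (∑ k, π N k (x n) * ∫ z in Ω, ω z * π N k z)
          = ∑ n ∈ Finset.range N,
            (r n * π N₂ j (x n)) * (∑ k, (∫ z in Ω, ω z * π N k z) * π N k (x n)) := by
            refine Finset.sum_congr rfl fun n _ => ?_
            congr 1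
            exact Finset.sum_congr rfl fun k _ => mul_comm _ _
        _ = ∑ k, (∫ z in Ω, ω z * π N k z) *
              ∑ n ∈ Finset.range N, (r n * π N₂ j (x n)) * π N k (x n) :=
            swap_aux' (fun k => ∫ z in Ω, ω z * π N k z) (fun k n => π N k (x n))
              (fun n => r n * π N₂ j (x n))
        _ = ∑ k, (∫ z in Ω, ω z * π N k z) * a k := by
            refine Finset.sum_congr rfl fun k _ => ?_
            congr 1
            rw [← inner1 k]
        _ = ∫ z in Ω, ω z * π N₂ j z := by
            rw [hIlin]
            exact Finset.sum_congr rfl fun k _ => mul_comm _ _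
    rw [s3]
  -- hence det(MN N) * c N j → 0
  have hdc : ∀ j, Tendsto (fun N => (MN N).det * c N j) atTop (𝓝 0) := by
    intro j
    have hev : ∀ᶠ N in atTop, (MN N).det * c N j = ∑ i, (MN N).adjugate j i * εv N i := by
      filter_upwards [eventually_ge_atTop N₂] with N hN
      have h1 : (MN N).adjugate.mulVec ((MN N).mulVec (c N)) = (MN N).det • c N := by
        rw [Matrix.mulVec_mulVec, Matrix.adjugate_mul, Matrix.smul_mulVec,
          Matrix.one_mulVec]
      have h2' : (MN N).mulVec (c N) = fun i => εv N i := funext fun i => hkey N hN i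
      rw [h2'] at h1
      have h3 := congrFun h1 j
      simpa [Matrix.mulVec, dotProduct] using h3.symm
    have hlim : Tendsto (fun N => ∑ i, (MN N).adjugate j i * εv N i) atTop (𝓝 0) := by
      have h4 : Tendsto (fun N => ∑ i, (MN N).adjugate j i * εv N i) atTop
          (𝓝 (∑ i : Fin K, M.adjugate j i * 0)) :=
        tendsto_finset_sum _ fun i _ => (hadjTend' j i).mul (hεt i)
      simpa using h4
    exact Tendsto.congr' (hev.mono fun N h => h.symm) hlim
  -- hence c N j → 0
  have hc0 : ∀ j, Tendsto (fun N => c N j) atTop (𝓝 0) := by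
    intro j
    have hinv := (hdetTend.inv₀ hMdet).mul (hdc j)
    have hev : ∀ᶠ N in atTop, ((MN N).det)⁻¹ * ((MN N).det * c N j) = c N j := by
      filter_upwards [hdetTend.eventually_ne hMdet] with N hN
      field_simp
    have h5 := Tendsto.congr' hev hinv
    simpa using h5
  -- uniform bounds for the basis functions on Ω
  have hCb : ∀ i : Fin K, ∃ Ci, ∀ y ∈ Ω, |π N₂ i y| ≤ Ci := by
    intro i
    obtain ⟨Ci, hCi⟩ := hΩ.exists_bound_of_continuousOn (hFc _ (heF i))
    exact ⟨Ci, fun y hy => by simpa [Real.norm_eq_abs] using hCi y hy⟩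
  choose C hC using hCb
  have hsum0 : Tendsto (fun N => ∑ i, |c N i| * C i) atTop (𝓝 0) := by
    have h4 : Tendsto (fun N => ∑ i, |c N i| * C i) atTop
        (𝓝 (∑ i : Fin K, |(0:ℝ)| * C i)) :=
      tendsto_finset_sum _ fun i _ => ((hc0 i).abs).mul_const _
    simpa using h4
  obtain ⟨N₃, h3⟩ := eventually_atTop.mp (hsum0.eventually_lt_const one_pos)
  refine ⟨max N₂ N₃, fun N hN n hn => ?_⟩
  have hN2 : N₂ ≤ N := le_trans (le_max_left _ _) hN
  have hN3 : N₃ ≤ N := le_trans (le_max_right _ _) hN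
  have hrepn := hcrep N hN2 (x n)
  have hb : |∑ i, c N i * π N₂ i (x n)| ≤ ∑ i, |c N i| * C i := by
    refine (Finset.abs_sum_le_sum_abs _ _).trans (Finset.sum_le_sum fun i _ => ?_)
    rw [abs_mul]
    exact mul_le_mul_of_nonneg_left (hC i (x n) (hx n)) (abs_nonneg _)
  rw [hrepn] at hb
  have h4 : |(∑ k, π N k (x n) * ∫ z in Ω, ω z * π N k z) - 1| < 1 :=
    lt_of_le_of_lt hb (h3 N hN3)
  have h5 := abs_lt.mp h4
  have h6 : 0 ≤ ∑ k, π N k (x n) * ∫ z in Ω, ω z * π N k z := by linarith [h5.1]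
  exact mul_nonneg (hr n) h6
end

section
/- Let Ω ⊂ ℝ^d be compact with positive measure and boundary of measure zero, let ω : Ω → ℝ≥0 be Riemann integrable with nowhere dense zero set, let F ⊂ C(Ω) be a K-dimensional subspace containing constants on which I[f] = ∫_Ω ω f dx is positive definite, and let (x_n) be equidistributed in Ω. Then there exists N₀ such that for every N ≥ N₀, the least-squares cubature formula with data points x_1, …, x_N and discrete weights r_n = |Ω|ω(x_n)/N is exact on F and all its weights are nonnegative. -/
open MeasureTheory Filter Topology
open Matrix

private lemma sum3_exchange {ι κ : Type*} [Fintype ι] (s : Finset κ) (ρ : κ → ℝ)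
    (a b : ι → ℝ) (u v : ι → κ → ℝ) :
    ∑ n ∈ s, ρ n * (∑ i, a i * u i n) * (∑ j, b j * v j n)
      = ∑ i, ∑ j, a i * b j * ∑ n ∈ s, ρ n * u i n * v j n := by
  have h : ∀ n ∈ s, ρ n * (∑ i, a i * u i n) * (∑ j, b j * v j n)
      = ∑ i, ∑ j, a i * b j * (ρ n * u i n * v j n) := by
    intro n _
    rw [mul_assoc, Finset.sum_mul_sum]
    simp only [Finset.mul_sum]
    refine Finset.sum_congr rfl fun i _ => Finset.sum_congr rfl fun j _ => by ring
  rw [Finset.sum_congr rfl h, Finset.sum_comm]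
  refine Finset.sum_congr rfl fun i _ => ?_
  rw [Finset.sum_comm]
  refine Finset.sum_congr rfl fun j _ => ?_
  rw [Finset.mul_sum]

/-- Under restrictions (R1)–(R4), for an equidistributed sequence and discrete
weights `r_n = |Ω| ω(x_n) / N`, the least-squares cubature formula is, for all
sufficiently large `N`, exact on `F` and has only nonnegative weights. -/
theorem ls_cf_exact_and_nonneg {d K : ℕ}
    (Ω : Set (EuclideanSpace ℝ (Fin d))) (hΩ : IsCompact Ω)
    (hpos : 0 < volume Ω) (hbd : volume (frontier Ω) = 0)
    (ω : (EuclideanSpace ℝ (Fin d)) → ℝ) (hω0 : ∀ y ∈ Ω, 0 ≤ ω y)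
    (hωbd : ∃ C, ∀ y ∈ Ω, |ω y| ≤ C)
    (hωm : AEMeasurable ω (volume.restrict Ω))
    (hωc : ∀ᵐ y ∂(volume.restrict Ω), ContinuousWithinAt ω Ω y)
    -- the zero set of `ω` is nowhere dense in `Ω` (in the sense of the paper)
    (hZ : ∀ y ∈ Ω, ω y ≠ 0 → ∃ ε > 0, ∀ z ∈ Ω, ω z = 0 → ε < dist y z)
    (F : Submodule ℝ ((EuclideanSpace ℝ (Fin d)) → ℝ))
    (hFc : ∀ f ∈ F, ContinuousOn f Ω)
    (hFdim : Module.finrank ℝ F = K)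
    (hone : (fun _ => (1 : ℝ)) ∈ F)
    (hposdef : ∀ u ∈ F, (∃ y ∈ Ω, u y ≠ 0) → 0 < ∫ y in Ω, ω y * u y ^ 2)
    (x : ℕ → EuclideanSpace ℝ (Fin d)) (hx : ∀ n, x n ∈ Ω)
    (hequi : ∀ g : (EuclideanSpace ℝ (Fin d)) → ℝ,
      (∃ C, ∀ y ∈ Ω, |g y| ≤ C) →
      AEMeasurable g (volume.restrict Ω) →
      (∀ᵐ y ∂(volume.restrict Ω), ContinuousWithinAt g Ω y) →
      Tendsto (fun N => (volume Ω).toReal / N * ∑ n ∈ Finset.range N, g (x n)) atTop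
        (𝓝 (∫ y in Ω, g y)))
    (r : ℕ → ℕ → ℝ) (hr : ∀ N n, r N n = (volume Ω).toReal * ω (x n) / N)
    -- discrete orthonormal bases of `F` w.r.t. `[u,v]_N`, for all large `N`
    (π : ℕ → Fin K → (EuclideanSpace ℝ (Fin d)) → ℝ)
    (hπ : ∀ᶠ N in atTop,
      (∀ k, π N k ∈ F) ∧
      (∀ k l, (∑ n ∈ Finset.range N, r N n * π N k (x n) * π N l (x n)) =
        if k = l then (1 : ℝ) else 0) ∧
      Submodule.span ℝ (Set.range (π N)) = F) :
    ∃ N₀, ∀ N ≥ N₀,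
      (∀ n < N, 0 ≤ r N n * ∑ k, π N k (x n) * ∫ y in Ω, ω y * π N k y) ∧
      (∀ f ∈ F,
        (∑ n ∈ Finset.range N,
          (r N n * ∑ k, π N k (x n) * ∫ y in Ω, ω y * π N k y) * f (x n)) =
        ∫ y in Ω, ω y * f y) := by
  classical
  have hΩm : MeasurableSet Ω := hΩ.isClosed.measurableSet
  set V : ℝ := (volume Ω).toReal with hVdef
  have hVpos : 0 < V := ENNReal.toReal_pos hpos.ne' hΩ.measure_lt_top.ne
  obtain ⟨y₀, hy₀⟩ : Ω.Nonempty := nonempty_of_measure_ne_zero hpos.ne'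
  -- integrability of ω * f for continuous f
  have hInt : ∀ f : (EuclideanSpace ℝ (Fin d)) → ℝ, ContinuousOn f Ω →
      IntegrableOn (fun y => ω y * f y) Ω volume := by
    intro f hf
    obtain ⟨Cw, hCw⟩ := hωbd
    obtain ⟨Cf, hCf⟩ := hΩ.exists_bound_of_continuousOn hf
    have hmeas : AEStronglyMeasurable (fun y => ω y * f y) (volume.restrict Ω) :=
      (hωm.mul (hf.aemeasurable hΩm)).aestronglyMeasurable
    refine Integrable.mono' (g := fun _ => Cw * Cf)
      (integrableOn_const hΩ.measure_lt_top.ne enorm_ne_top) hmeas ?_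
    filter_upwards [ae_restrict_mem hΩm] with y hy
    have h1 : |ω y| ≤ Cw := hCw y hy
    have h2 : ‖f y‖ ≤ Cf := hCf y hy
    calc ‖ω y * f y‖ = |ω y| * ‖f y‖ := by
          simp [Real.norm_eq_abs, abs_mul]
      _ ≤ Cw * Cf := mul_le_mul h1 h2 (norm_nonneg _) ((abs_nonneg _).trans h1)
  -- linearity of the integral over finite combinations
  have hIsum : ∀ (g : Fin K → (EuclideanSpace ℝ (Fin d)) → ℝ),
      (∀ k, ContinuousOn (g k) Ω) → ∀ a : Fin K → ℝ,
      (∫ y in Ω, ω y * (∑ k, a k * g k y)) = ∑ k, a k * ∫ y in Ω, ω y * g k y := by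
    intro g hg a
    have h1 : (fun y => ω y * (∑ k, a k * g k y))
        = fun y => ∑ k, a k * (ω y * g k y) := by
      funext y
      rw [Finset.mul_sum]
      exact Finset.sum_congr rfl fun k _ => by ring
    rw [h1, integral_finset_sum]
    · exact Finset.sum_congr rfl fun k _ => integral_const_mul _ _
    · exact fun k _ => (hInt (g k) (hg k)).const_mul (a k)
  -- the reference basis ψ
  obtain ⟨M₁, hM₁⟩ := eventually_atTop.1 hπ
  obtain ⟨hψF, hψorth, hψspan⟩ := hM₁ M₁ le_rfl
  set ψ : Fin K → (EuclideanSpace ℝ (Fin d)) → ℝ := π M₁ with hψdef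
  have hψc : ∀ i, ContinuousOn (ψ i) Ω := fun i => hFc _ (hψF i)
  choose Mb hMb using fun i => hΩ.exists_bound_of_continuousOn (hψc i)
  have hMb0 : ∀ i, 0 ≤ Mb i := fun i => (norm_nonneg _).trans (hMb i y₀ hy₀)
  -- matrices
  set G : ℕ → Matrix (Fin K) (Fin K) ℝ := fun N => Matrix.of fun i j =>
    ∑ n ∈ Finset.range N, r N n * ψ i (x n) * ψ j (x n) with hGdef
  set H : Matrix (Fin K) (Fin K) ℝ := Matrix.of fun i j =>
    ∫ y in Ω, ω y * (ψ i y * ψ j y) with hHdef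
  -- convergence of the Gram matrices
  have hGtend : Tendsto G atTop (𝓝 H) := by
    refine tendsto_pi_nhds.2 ?_
    intro i
    rw [tendsto_pi_nhds]
    intro j
    obtain ⟨Cw, hCw⟩ := hωbd
    obtain ⟨Ci, hCi⟩ := hΩ.exists_bound_of_continuousOn (hψc i)
    obtain ⟨Cj, hCj⟩ := hΩ.exists_bound_of_continuousOn (hψc j)
    have hCw0 : 0 ≤ Cw := (abs_nonneg _).trans (hCw y₀ hy₀)
    have hCi0 : 0 ≤ Ci := (norm_nonneg _).trans (hCi y₀ hy₀)
    have hCj0 : 0 ≤ Cj := (norm_nonneg _).trans (hCj y₀ hy₀)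
    have hg := hequi (fun y => ω y * (ψ i y * ψ j y))
      ⟨Cw * (Ci * Cj), by
        intro y hy
        rw [abs_mul, abs_mul]
        have h1 := hCw y hy
        have h2 := hCi y hy
        have h3 := hCj y hy
        rw [Real.norm_eq_abs] at h2 h3
        exact mul_le_mul h1 (mul_le_mul h2 h3 (abs_nonneg _) hCi0)
          (mul_nonneg (abs_nonneg _) (abs_nonneg _)) hCw0⟩
      (hωm.mul (((hψc i).aemeasurable hΩm).mul ((hψc j).aemeasurable hΩm)))
      (by
        filter_upwards [hωc, ae_restrict_mem hΩm] with y h1 h2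
        exact h1.mul (((hψc i) y h2).mul ((hψc j) y h2)))
    have heq : (fun N => G N i j)
        = fun N : ℕ => V / N * ∑ n ∈ Finset.range N, ω (x n) * (ψ i (x n) * ψ j (x n)) := by
      funext N
      simp only [hGdef, Matrix.of_apply]
      rw [Finset.mul_sum]
      refine Finset.sum_congr rfl fun n _ => ?_
      rw [hr]
      ring
    rw [heq]
    exact hg
  -- inner products of ψ-combinations
  have hIP : ∀ v w : Fin K → ℝ,
      (∫ y in Ω, ω y * ((∑ i, v i * ψ i y) * (∑ j, w j * ψ j y)))
        = ∑ i, v i * ∑ j, w j * H i j := by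
    intro v w
    have hu2c : ContinuousOn (fun y => ∑ j, w j * ψ j y) Ω := by
      apply continuousOn_finset_sum
      exact fun j _ => continuousOn_const.mul (hψc j)
    have step1 : (fun y => ω y * ((∑ i, v i * ψ i y) * (∑ j, w j * ψ j y)))
        = fun y => ω y * (∑ i, v i * (ψ i y * ∑ j, w j * ψ j y)) := by
      funext y
      congr 1
      rw [Finset.sum_mul]
      exact Finset.sum_congr rfl fun i _ => by ring
    rw [step1, hIsum (fun i y => ψ i y * ∑ j, w j * ψ j y)
      (fun i => (hψc i).mul hu2c) v]
    refine Finset.sum_congr rfl fun i _ => ?_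
    congr 1
    have step2 : (fun y => ω y * (ψ i y * ∑ j, w j * ψ j y))
        = fun y => ω y * (∑ j, w j * (ψ i y * ψ j y)) := by
      funext y
      congr 1
      rw [Finset.mul_sum]
      exact Finset.sum_congr rfl fun j _ => by ring
    rw [step2, hIsum (fun j y => ψ i y * ψ j y) (fun j => (hψc i).mul (hψc j)) w]
    rfl
  -- H is nonsingular
  have hHdet : H.det ≠ 0 := by
    intro hdet
    obtain ⟨v, hv0, hv⟩ := Matrix.exists_mulVec_eq_zero_iff.2 hdet
    have hvap : ∀ i, ∑ j, H i j * v j = 0 := by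
      intro i
      have := congrFun hv i
      simpa [Matrix.mulVec, dotProduct] using this
    set u : (EuclideanSpace ℝ (Fin d)) → ℝ := fun y => ∑ i, v i * ψ i y with hu
    have huF : u ∈ F := by
      have h1 : u = ∑ i, v i • ψ i := by
        funext y
        simp [hu, Finset.sum_apply]
      rw [h1]
      exact Submodule.sum_mem _ fun i _ => Submodule.smul_mem _ _ (hψF i)
    have hu0 : (∫ y in Ω, ω y * u y ^ 2) = 0 := by
      have h1 : (fun y => ω y * u y ^ 2)
          = fun y => ω y * ((∑ i, v i * ψ i y) * (∑ j, v j * ψ j y)) := by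
        funext y
        simp only [hu]
        ring
      rw [h1, hIP v v]
      refine Finset.sum_eq_zero fun i _ => ?_
      have h2 : ∑ j, v j * H i j = 0 := by
        rw [← hvap i]
        exact Finset.sum_congr rfl fun j _ => mul_comm _ _
      rw [h2, mul_zero]
    have huz : ∀ y ∈ Ω, u y = 0 := by
      by_contra hcon
      push_neg at hcon
      obtain ⟨y, hy, hne⟩ := hcon
      have := hposdef u huF ⟨y, hy, hne⟩
      rw [hu0] at this
      exact lt_irrefl 0 this
    apply hv0
    funext k
    show v k = 0
    have h2 : v k = ∑ n ∈ Finset.range M₁, r M₁ n * ψ k (x n) * u (x n) := by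
      calc v k = ∑ l, v l * (if k = l then (1:ℝ) else 0) := by simp
        _ = ∑ l, v l * ∑ n ∈ Finset.range M₁, r M₁ n * ψ k (x n) * ψ l (x n) := by
            refine Finset.sum_congr rfl fun l _ => ?_
            rw [hψorth k l]
        _ = ∑ n ∈ Finset.range M₁, r M₁ n * ψ k (x n) * u (x n) := by
            simp only [Finset.mul_sum]
            rw [Finset.sum_comm]
            refine Finset.sum_congr rfl fun n _ => ?_
            simp only [hu]
            rw [Finset.mul_sum]
            exact Finset.sum_congr rfl fun l _ => by ring
    rw [h2]
    exact Finset.sum_eq_zero fun n _ => by rw [huz _ (hx n), mul_zero]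
  -- coefficients of the constant 1
  have h1mem : (fun _ => (1 : ℝ)) ∈ Submodule.span ℝ (Set.range ψ) := by
    rw [hψspan]; exact hone
  obtain ⟨c, hc⟩ := (Submodule.mem_span_range_iff_exists_fun ℝ).1 h1mem
  have hcy : ∀ y, ∑ i, c i * ψ i y = 1 := by
    intro y
    have := congrFun hc y
    simpa [Finset.sum_apply] using this
  -- b = H.mulVec c
  set b : Fin K → ℝ := fun i => ∫ y in Ω, ω y * ψ i y with hbdef
  have hb : H.mulVec c = b := by
    funext i
    have h0 : H.mulVec c i = ∑ j, H i j * c j := by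
      simp [Matrix.mulVec, dotProduct]
    rw [h0]
    calc ∑ j, H i j * c j
        = ∑ j, c j * ∫ y in Ω, ω y * (ψ i y * ψ j y) :=
          Finset.sum_congr rfl fun j _ => mul_comm _ _
      _ = ∫ y in Ω, ω y * (∑ j, c j * (ψ i y * ψ j y)) :=
          (hIsum (fun j y => ψ i y * ψ j y) (fun j => (hψc i).mul (hψc j)) c).symm
      _ = b i := by
          congr 1
          funext y
          have h1 : ∑ j, c j * (ψ i y * ψ j y) = ψ i y * ∑ j, c j * ψ j y := by
            rw [Finset.mul_sum]
            exact Finset.sum_congr rfl fun j _ => by ring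
          rw [h1, hcy, mul_one]
  -- quantitative setup
  set Cabs : ℝ := (∑ i, Mb i) * (∑ j, |c j|) with hCabs
  have hCabs0 : 0 ≤ Cabs :=
    mul_nonneg (Finset.sum_nonneg fun i _ => hMb0 i)
      (Finset.sum_nonneg fun j _ => abs_nonneg _)
  set ε₀ : ℝ := 1 / (Cabs + 1) with hε₀
  have hε₀pos : 0 < ε₀ := by positivity
  -- eventual entrywise bound on (G N)⁻¹ * H - 1
  have hev : ∀ᶠ N in atTop, ∀ i j, |((G N)⁻¹ * H - 1) i j| < ε₀ := by
    have hconts : ContinuousAt (fun M : Matrix (Fin K) (Fin K) ℝ => M⁻¹) H :=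
      continuousAt_matrix_inv H (by rw [Ring.inverse_eq_inv']; exact continuousAt_inv₀ hHdet)
    have hinvT : Tendsto (fun N => (G N)⁻¹) atTop (𝓝 H⁻¹) := hconts.tendsto.comp hGtend
    have hmulT : Tendsto (fun N => (G N)⁻¹ * H) atTop (𝓝 (H⁻¹ * H)) :=
      hinvT.mul tendsto_const_nhds
    rw [Matrix.nonsing_inv_mul H (Ne.isUnit hHdet)] at hmulT
    have hsubT : Tendsto (fun N => (G N)⁻¹ * H - 1) atTop (𝓝 0) := by
      simpa using hmulT.sub (tendsto_const_nhds (x := (1 : Matrix (Fin K) (Fin K) ℝ)))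
    rw [eventually_all]
    intro i
    rw [eventually_all]
    intro j
    have hcontij : Continuous (fun M : Matrix (Fin K) (Fin K) ℝ => M i j) :=
      continuous_id.matrix_elem i j
    have hij : Tendsto (fun N => ((G N)⁻¹ * H - 1) i j) atTop (𝓝 0) := by
      exact (hcontij.tendsto 0).comp hsubT
    filter_upwards [Metric.tendsto_nhds.mp hij ε₀ hε₀pos] with N h
    simpa [Real.dist_eq] using h
  obtain ⟨N₂, hN₂⟩ := eventually_atTop.1 hev
  refine ⟨max M₁ N₂, fun N hN => ?_⟩
  obtain ⟨hπF, hπorth, hπspan⟩ := hM₁ N (le_trans (le_max_left _ _) hN)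
  -- coefficients of π N in terms of ψ
  have hmem : ∀ k, π N k ∈ Submodule.span ℝ (Set.range ψ) := by
    intro k; rw [hψspan]; exact hπF k
  choose A hA using fun k => (Submodule.mem_span_range_iff_exists_fun ℝ).1 (hmem k)
  have hAy : ∀ k y, π N k y = ∑ j, A k j * ψ j y := by
    intro k y
    have := congrFun (hA k) y
    simpa [Finset.sum_apply] using this.symm
  set AM : Matrix (Fin K) (Fin K) ℝ := Matrix.of A with hAM
  -- the discrete orthonormality in matrix form
  have hAG : AM * G N * AMᵀ = 1 := by
    ext k l
    have horth := hπorth k l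
    have h1 : ∑ n ∈ Finset.range N, r N n * (∑ i, A k i * ψ i (x n)) * (∑ j, A l j * ψ j (x n))
        = if k = l then (1:ℝ) else 0 := by
      rw [← horth]
      exact Finset.sum_congr rfl fun n _ => by rw [← hAy k (x n), ← hAy l (x n)]
    rw [sum3_exchange] at h1
    have hentry : (AM * G N * AMᵀ) k l
        = ∑ i, ∑ j, A k i * A l j * ∑ n ∈ Finset.range N, r N n * ψ i (x n) * ψ j (x n) := by
      simp only [Matrix.mul_apply, Matrix.transpose_apply, hAM, Matrix.of_apply,
        Finset.sum_mul, hGdef]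
      rw [Finset.sum_comm]
      refine Finset.sum_congr rfl fun i _ => Finset.sum_congr rfl fun j _ => by ring
    rw [hentry]
    rw [Matrix.one_apply]
    exact h1
  have hdetA : IsUnit AM.det ∧ IsUnit (G N).det := by
    have hd := congrArg Matrix.det hAG
    rw [Matrix.det_mul, Matrix.det_mul, Matrix.det_transpose, Matrix.det_one] at hd
    exact ⟨IsUnit.of_mul_eq_one (a := AM.det) ((G N).det * AM.det) (by rw [← hd]; ring),
      IsUnit.of_mul_eq_one (a := (G N).det) (AM.det * AM.det) (by rw [← hd]; ring)⟩
  have hAtA : AMᵀ * AM = (G N)⁻¹ := by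
    have h1 : AM⁻¹ = G N * AMᵀ :=
      Matrix.inv_eq_right_inv (by rw [← Matrix.mul_assoc]; exact hAG)
    have h2 : G N * (AMᵀ * AM) = 1 := by
      rw [← Matrix.mul_assoc, ← h1]
      exact Matrix.nonsing_inv_mul AM hdetA.1
    exact (Matrix.inv_eq_right_inv h2).symm
  -- the integrals of π N
  set Ik : Fin K → ℝ := fun k => ∫ y in Ω, ω y * π N k y with hIk
  have hIkA : ∀ k, Ik k = ∑ j, A k j * b j := by
    intro k
    have h1 : (fun y => ω y * π N k y) = fun y => ω y * ∑ j, A k j * ψ j y := by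
      funext y
      rw [hAy]
    show (∫ y in Ω, ω y * π N k y) = _
    rw [h1, hIsum ψ hψc (A k)]
  -- T y = Σ_k π N k y * Ik k
  have hT : ∀ y, (∑ k, π N k y * Ik k)
      = ∑ i, ψ i y * (((G N)⁻¹ * H).mulVec c) i := by
    intro y
    have e1 : ∀ k, π N k y * Ik k
        = (1:ℝ) * (∑ i, ψ i y * A k i) * (∑ j, b j * A k j) := by
      intro k
      rw [hAy k y, hIkA k, one_mul]
      congr 1
      · exact Finset.sum_congr rfl fun i _ => mul_comm _ _
      · exact Finset.sum_congr rfl fun j _ => mul_comm _ _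
    calc ∑ k, π N k y * Ik k
        = ∑ k, (1:ℝ) * (∑ i, ψ i y * A k i) * (∑ j, b j * A k j) :=
          Finset.sum_congr rfl fun k _ => e1 k
      _ = ∑ i, ∑ j, ψ i y * b j * ∑ k, (1:ℝ) * A k i * A k j := by
          exact sum3_exchange Finset.univ (fun _ => (1:ℝ)) (fun i => ψ i y) b
            (fun i k => A k i) (fun j k => A k j)
      _ = ∑ i, ψ i y * ((AMᵀ * AM).mulVec b) i := by
          refine Finset.sum_congr rfl fun i _ => ?_
          have h2 : ((AMᵀ * AM).mulVec b) i = ∑ j, (∑ k, A k i * A k j) * b j := by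
            simp [Matrix.mulVec, dotProduct, Matrix.mul_apply, hAM]
          rw [h2, Finset.mul_sum]
          refine Finset.sum_congr rfl fun j _ => ?_
          rw [Finset.sum_mul, Finset.mul_sum, Finset.mul_sum]
          refine Finset.sum_congr rfl fun k _ => by ring
      _ = ∑ i, ψ i y * (((G N)⁻¹ * H).mulVec c) i := by
          rw [hAtA, ← hb, Matrix.mulVec_mulVec]
  -- T y is positive on Ω
  have hTpos : ∀ y ∈ Ω, 0 < ∑ k, π N k y * Ik k := by
    intro y hy
    set D : Matrix (Fin K) (Fin K) ℝ := (G N)⁻¹ * H - 1 with hD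
    have hDb : ∀ i j, |D i j| ≤ ε₀ :=
      fun i j => (hN₂ N (le_trans (le_max_right _ _) hN) i j).le
    have hsub : (∑ k, π N k y * Ik k) - 1 = ∑ i, ψ i y * (D.mulVec c) i := by
      rw [hT y]
      have h1 : ∑ i, ψ i y * c i = 1 := by
        rw [← hcy y]
        exact Finset.sum_congr rfl fun i _ => mul_comm _ _
      have h2 : D.mulVec c = ((G N)⁻¹ * H).mulVec c - c := by
        rw [hD, Matrix.sub_mulVec, Matrix.one_mulVec]
      rw [h2]
      rw [← h1, ← Finset.sum_sub_distrib]
      exact Finset.sum_congr rfl fun i _ => by rw [Pi.sub_apply]; ring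
    have hbound : |(∑ k, π N k y * Ik k) - 1| ≤ ε₀ * Cabs := by
      rw [hsub]
      calc |∑ i, ψ i y * (D.mulVec c) i| ≤ ∑ i, |ψ i y * (D.mulVec c) i| :=
            Finset.abs_sum_le_sum_abs _ _
        _ ≤ ∑ i, Mb i * (ε₀ * ∑ j, |c j|) := by
            refine Finset.sum_le_sum fun i _ => ?_
            rw [abs_mul]
            have hψb : |ψ i y| ≤ Mb i := by
              have := hMb i y hy
              rwa [Real.norm_eq_abs] at this
            have hz : |(D.mulVec c) i| ≤ ε₀ * ∑ j, |c j| := by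
              have h3 : (D.mulVec c) i = ∑ j, D i j * c j := by
                simp [Matrix.mulVec, dotProduct]
              rw [h3]
              calc |∑ j, D i j * c j| ≤ ∑ j, |D i j * c j| :=
                    Finset.abs_sum_le_sum_abs _ _
                _ ≤ ∑ j, ε₀ * |c j| := by
                    refine Finset.sum_le_sum fun j _ => ?_
                    rw [abs_mul]
                    exact mul_le_mul_of_nonneg_right (hDb i j) (abs_nonneg _)
                _ = ε₀ * ∑ j, |c j| := by rw [Finset.mul_sum]
            exact mul_le_mul hψb hz (abs_nonneg _) (hMb0 i)
        _ = ε₀ * Cabs := by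
            rw [← Finset.sum_mul, hCabs]
            ring
    have hlt : ε₀ * Cabs < 1 := by
      rw [hε₀, div_mul_eq_mul_div, one_mul, div_lt_one (by linarith)]
      linarith
    have := abs_lt.mp (lt_of_le_of_lt hbound hlt)
    linarith [this.1]
  constructor
  · intro n _
    refine mul_nonneg ?_ (le_of_lt (hTpos (x n) (hx n)))
    rw [hr]
    exact div_nonneg (mul_nonneg hVpos.le (hω0 _ (hx n))) (Nat.cast_nonneg N)
  · intro f hf
    have hfmem : f ∈ Submodule.span ℝ (Set.range (π N)) := by rw [hπspan]; exact hf
    obtain ⟨a, ha⟩ := (Submodule.mem_span_range_iff_exists_fun ℝ).1 hfmem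
    have hfy : ∀ y, f y = ∑ l, a l * π N l y := by
      intro y
      have := congrFun ha y
      simpa [Finset.sum_apply] using this.symm
    show (∑ n ∈ Finset.range N, (r N n * ∑ k, π N k (x n) * Ik k) * f (x n))
        = ∫ y in Ω, ω y * f y
    have hLHS : (∑ n ∈ Finset.range N, (r N n * ∑ k, π N k (x n) * Ik k) * f (x n))
        = ∑ k, ∑ l, Ik k * a l
            * ∑ n ∈ Finset.range N, r N n * π N k (x n) * π N l (x n) := by
      rw [← sum3_exchange (Finset.range N) (r N) Ik a
        (fun k n => π N k (x n)) (fun l n => π N l (x n))]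
      refine Finset.sum_congr rfl fun n _ => ?_
      rw [hfy (x n)]
      congr 1
      congr 1
      exact Finset.sum_congr rfl fun k _ => mul_comm _ _
    rw [hLHS]
    have hR : (∫ y in Ω, ω y * f y) = ∑ l, a l * Ik l := by
      have h1 : (fun y => ω y * f y) = fun y => ω y * ∑ l, a l * π N l y := by
        funext y
        rw [hfy y]
      rw [h1]
      exact hIsum (π N) (fun k => hFc _ (hπF k)) a
    rw [hR]
    calc ∑ k, ∑ l, Ik k * a l * ∑ n ∈ Finset.range N, r N n * π N k (x n) * π N l (x n)
        = ∑ k, ∑ l, Ik k * a l * (if k = l then (1:ℝ) else 0) :=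
          Finset.sum_congr rfl fun k _ => Finset.sum_congr rfl fun l _ => by rw [hπorth]
      _ = ∑ k, Ik k * a k := by
          simp only [mul_ite, mul_one, mul_zero, Finset.sum_ite_eq, Finset.mem_univ, if_true]
      _ = ∑ l, a l * Ik l := Finset.sum_congr rfl fun k _ => mul_comm _ _
end
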